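/- In the iterated-estimate setting, define the estimated degree deg-hat^S := max_{w ∈ 𝔽₂^J} ( vdeg-hat^S(w) + wt(w) ) ∈ ℤ ∪ {-∞}. Let d be an integer with d > |J|. If K satisfies J ⊆ K ⊆ {0,…,n-1} and deg-hat^K ≥ d, then for every index set I with K ⊆ I ⊆ {0,…,n-1}, deg-hat^I ≥ d. -/

import Mathlib

open Finset

section Core

variable {α : Type*}

/-- The monomial `x^u` over `𝔽₂`. -/
def monom [Fintype α] (u x : α → ZMod 2) : ZMod 2 :=
  ∏ i, if u i = 1 then x i else 1

/-- The ANF coefficient of the monomial `x^u` in `f`, via Möbius inversion. -/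
def anf [Fintype α] [DecidableEq α] (f : (α → ZMod 2) → ZMod 2) (u : α → ZMod 2) : ZMod 2 :=
  ∑ v ∈ Finset.univ.filter (fun v : α → ZMod 2 => ∀ i, v i = 1 → u i = 1), f v

/-- Hamming weight. -/
def wt [Fintype α] (u : α → ZMod 2) : ℕ :=
  (Finset.univ.filter (fun i => u i = 1)).card

/-- Algebraic degree, in `ℤ ∪ {-∞}`. -/
def deg [Fintype α] [DecidableEq α] (f : (α → ZMod 2) → ZMod 2) : WithBot ℤ :=
  (Finset.univ.filter (fun u : α → ZMod 2 => anf f u = 1)).sup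
    (fun u => ((wt u : ℤ) : WithBot ℤ))

/-- Combine an assignment on `I` with one on `Iᶜ` to a full assignment. -/
def combine [Fintype α] [DecidableEq α] (I : Finset α) (w : ↥I → ZMod 2)
    (y : ↥Iᶜ → ZMod 2) : α → ZMod 2 :=
  fun i => if h : i ∈ I then w ⟨i, h⟩ else y ⟨i, Finset.mem_compl.mpr h⟩

/-- The coefficient function `g_{f,w}` of `x_I^w` in `f`, a Boolean function of `x_{Iᶜ}`. -/
def coeffFun [Fintype α] [DecidableEq α] (f : (α → ZMod 2) → ZMod 2) (I : Finset α)
    (w : ↥I → ZMod 2) : (↥Iᶜ → ZMod 2) → ZMod 2 :=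
  fun y => ∑ t : ↥Iᶜ → ZMod 2, anf f (combine I w t) * monom t y

/-- The vector degree of `f` w.r.t. the index set `I`. -/
def vdeg [Fintype α] [DecidableEq α] (f : (α → ZMod 2) → ZMod 2) (I : Finset α)
    (w : ↥I → ZMod 2) : WithBot ℤ :=
  deg (coeffFun f I w)

/-- `f` with the variables outside `S` set to `0`. -/
def restrict0 [Fintype α] [DecidableEq α] (f : (α → ZMod 2) → ZMod 2) (S : Finset α) :
    (α → ZMod 2) → ZMod 2 :=
  fun x => f (fun i => if i ∈ S then x i else 0)

/-- Combine an assignment on `I₁` with one on `I₂ \ I₁` to an assignment on `I₂`. -/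
def joinFn [DecidableEq α] {I₁ I₂ : Finset α} (w : ↥I₁ → ZMod 2)
    (w' : ↥(I₂ \ I₁) → ZMod 2) : ↥I₂ → ZMod 2 :=
  fun j => if h : (j : α) ∈ I₁ then w ⟨(j : α), h⟩
           else w' ⟨(j : α), Finset.mem_sdiff.mpr ⟨j.2, h⟩⟩

end Core

/-- Coordinatewise OR of the family `W i`, over indices `i` with `u i = 1`. -/
def orFam {n : ℕ} {β : Type*} (u : Fin n → ZMod 2) (W : Fin n → β → ZMod 2) :
    β → ZMod 2 :=
  fun j => if ∃ i, u i = 1 ∧ W i j = 1 then 1 else 0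

/-- The vector numeric mapping `VDEG_d(f, V)`. -/
def VDEG {n : ℕ} {δ : Type*} [Fintype δ] [DecidableEq δ]
    (f : (Fin n → ZMod 2) → ZMod 2) (V : Fin n → (δ → ZMod 2) → WithBot ℤ)
    (w : δ → ZMod 2) : WithBot ℤ :=
  (Finset.univ.filter (fun p : (Fin n → ZMod 2) × (Fin n → δ → ZMod 2) =>
      anf f p.1 = 1 ∧ (∀ i, p.1 i = 0 → p.2 i = 0) ∧ w = orFam p.1 p.2)).sup
    (fun p => ∑ i ∈ Finset.univ.filter (fun i => p.1 i = 1), V i (p.2 i))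

/-- Monomial transition `π_u(x) → π_v(g(x))`. -/
def MonTrans {a b : ℕ} (g : (Fin a → ZMod 2) → (Fin b → ZMod 2))
    (u : Fin a → ZMod 2) (v : Fin b → ZMod 2) : Prop :=
  anf (fun x => monom v (g x)) u = 1

/-- Monomial trails from level `a` to level `b`, with fixed endpoints `u`, `v`
(trails are normalized to be `0` outside the levels `a, …, b`). -/
def Trails (n : ℕ → ℕ) (f : ∀ i, (Fin (n i) → ZMod 2) → (Fin (n (i + 1)) → ZMod 2))
    (a b : ℕ) (u : Fin (n a) → ZMod 2) (v : Fin (n b) → ZMod 2) :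
    Set (∀ i, Fin (n i) → ZMod 2) :=
  {t | t a = u ∧ t b = v ∧ (∀ i, a ≤ i → i < b → MonTrans (f i) (t i) (t (i + 1))) ∧
       (∀ i, i < a → t i = fun _ => 0) ∧ (∀ i, b < i → t i = fun _ => 0)}

/-- The iterated composition `f_{b-1} ∘ ⋯ ∘ f_a` (meaningful for `a ≤ b`). -/
def iterComp (n : ℕ → ℕ) (f : ∀ i, (Fin (n i) → ZMod 2) → (Fin (n (i + 1)) → ZMod 2))
    (a : ℕ) : (b : ℕ) → (Fin (n a) → ZMod 2) → (Fin (n b) → ZMod 2)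
  | 0 => fun x j => if h : a = 0 then x (Fin.cast (show n 0 = n a by rw [h]) j) else 0
  | b + 1 =>
      if h : a = b + 1 then fun x j => x (Fin.cast (show n (b + 1) = n a by rw [h]) j)
      else fun x => f b (iterComp n f a b x)

section Iterated

/-- Embed an index set `J ⊆ {0,…,n-1}` into the joint index set of size `n' 0 = n + m`. -/
def liftJ {n m N0 : ℕ} (h0 : N0 = n + m) (J : Finset (Fin n)) : Finset (Fin N0) :=
  J.image (fun (j : Fin n) => (⟨j.val, by have := j.isLt; omega⟩ : Fin N0))

/-- Set the `x`-variables outside `S` to zero in a joint assignment. -/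
def mask0 {n m N0 : ℕ} (h0 : N0 = n + m) (S : Finset (Fin n)) (z : Fin N0 → ZMod 2) :
    Fin N0 → ZMod 2 :=
  fun i => if h : (i : ℕ) < n then (if (⟨(i : ℕ), h⟩ : Fin n) ∈ S then z i else 0) else z i

/-- The iterated estimated vector degrees `V_t^S`. -/
def Vt {n m : ℕ} (n' : ℕ → ℕ) (h0 : n' 0 = n + m)
    (f : ∀ t, (Fin (n' t) → ZMod 2) → (Fin (n' (t + 1)) → ZMod 2))
    (J S : Finset (Fin n)) :
    (t : ℕ) → Fin (n' (t + 1)) → (↥(liftJ h0 J) → ZMod 2) → WithBot ℤ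
  | 0 => fun i => vdeg (fun z => f 0 (mask0 h0 S z) i) (liftJ h0 J)
  | t + 1 => fun i => VDEG (fun y => f (t + 1) y i) (Vt n' h0 f J S t)

/-- The estimated vector degree `vdeg-hat^S` (here `r = s + 2`). -/
def vdegHat {n m : ℕ} (n' : ℕ → ℕ) (h0 : n' 0 = n + m)
    (f : ∀ t, (Fin (n' t) → ZMod 2) → (Fin (n' (t + 1)) → ZMod 2))
    (J : Finset (Fin n)) (s : ℕ) (S : Finset (Fin n)) :
    (↥(liftJ h0 J) → ZMod 2) → WithBot ℤ :=
  VDEG (fun y => monom (fun _ => 1) (f (s + 1) y)) (Vt n' h0 f J S s)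

/-- The estimated degree `deg-hat^S`. -/
noncomputable def degHat {n m : ℕ} (n' : ℕ → ℕ) (h0 : n' 0 = n + m)
    (f : ∀ t, (Fin (n' t) → ZMod 2) → (Fin (n' (t + 1)) → ZMod 2))
    (J : Finset (Fin n)) (s : ℕ) (S : Finset (Fin n)) : WithBot ℤ :=
  Finset.univ.sup (fun w : ↥(liftJ h0 J) → ZMod 2 =>
    vdegHat n' h0 f J s S w + ((wt w : ℤ) : WithBot ℤ))

end Iterated

set_option linter.unusedSectionVars false

-- === auxiliary lemmas ===
section Aux
variable {α : Type*} [Fintype α] [DecidableEq α]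

lemma zmod2_em' : ∀ a : ZMod 2, a = 0 ∨ a = 1 := by decide
lemma zmod2_em (a : ZMod 2) : a = 0 ∨ a = 1 := zmod2_em' a
lemma zmod2_add_self' : ∀ a : ZMod 2, a + a = 0 := by decide
lemma zmod2_add_self (a : ZMod 2) : a + a = 0 := zmod2_add_self' a
lemma zmod2_add_one_ne' : ∀ a : ZMod 2, a + 1 ≠ a := by decide
lemma zmod2_add_one_ne (a : ZMod 2) : a + 1 ≠ a := zmod2_add_one_ne' a

lemma monom_eq_ite (u x : α → ZMod 2) :
    monom u x = if ∀ i, u i = 1 → x i = 1 then 1 else 0 := by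
  unfold monom
  split_ifs with h
  · apply Finset.prod_eq_one
    intro i _
    by_cases hu : u i = 1
    · rw [if_pos hu, h i hu]
    · rw [if_neg hu]
  · push_neg at h
    obtain ⟨i, hu, hx⟩ := h
    apply Finset.prod_eq_zero (Finset.mem_univ i)
    rw [if_pos hu, (zmod2_em (x i)).resolve_right hx]

/-- flip coordinate i₀ -/
def flipAt (i₀ : α) (v : α → ZMod 2) : α → ZMod 2 := Function.update v i₀ (v i₀ + 1)

lemma flipAt_ne_apply (i₀ : α) (v : α → ZMod 2) {i : α} (h : i ≠ i₀) : flipAt i₀ v i = v i := by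
  simp [flipAt, Function.update_apply, h]

lemma flipAt_self_apply (i₀ : α) (v : α → ZMod 2) : flipAt i₀ v i₀ = v i₀ + 1 := by
  simp [flipAt]

lemma flipAt_flipAt (i₀ : α) (v : α → ZMod 2) : flipAt i₀ (flipAt i₀ v) = v := by
  funext i
  by_cases h : i = i₀
  · subst h
    rw [flipAt_self_apply, flipAt_self_apply]
    have : (1 : ZMod 2) + 1 = 0 := by decide
    rw [add_assoc, this, add_zero]
  · rw [flipAt_ne_apply _ _ h, flipAt_ne_apply _ _ h]

lemma flipAt_ne (i₀ : α) (v : α → ZMod 2) : flipAt i₀ v ≠ v := by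
  intro h
  have := congrFun h i₀
  rw [flipAt_self_apply] at this
  exact zmod2_add_one_ne _ this

lemma sum_monom (u t : α → ZMod 2) :
    (∑ v ∈ Finset.univ.filter (fun v : α → ZMod 2 => ∀ i, v i = 1 → u i = 1), monom t v)
      = if t = u then 1 else 0 := by
  split_ifs with htu
  · subst htu
    rw [Finset.sum_eq_single t]
    · rw [monom_eq_ite, if_pos (fun i h => h)]
    · intro v hv hvt
      rw [Finset.mem_filter] at hv
      rw [monom_eq_ite, if_neg]
      intro hall
      apply hvt
      funext i
      rcases zmod2_em (v i) with h0 | h1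
      · rcases zmod2_em (t i) with ht0 | ht1
        · rw [h0, ht0]
        · have hh := hall i ht1
          rw [h0] at hh
          exact absurd hh (by decide)
      · rw [h1, hv.2 i h1]
    · intro h
      exact absurd (Finset.mem_filter.mpr ⟨Finset.mem_univ _, fun i h => h⟩) h
  · by_cases hle : ∀ i, t i = 1 → u i = 1
    · -- t ≼ u, t ≠ u : involution
      have : ∃ i₀, u i₀ = 1 ∧ t i₀ ≠ 1 := by
        by_contra hc
        push_neg at hc
        apply htu
        funext i
        rcases zmod2_em (t i) with h0 | h1
        · rcases zmod2_em (u i) with hu0 | hu1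
          · rw [h0, hu0]
          · have hh := hc i hu1
            rw [h0] at hh
            exact absurd hh (by decide)
        · rw [h1, hle i h1]
      obtain ⟨i₀, hu₀, ht₀⟩ := this
      apply Finset.sum_involution (fun v _ => flipAt i₀ v)
      · intro v hv
        have : monom t (flipAt i₀ v) = monom t v := by
          unfold monom
          apply Finset.prod_congr rfl
          intro i _
          by_cases h : i = i₀
          · subst h
            rw [if_neg ht₀, if_neg ht₀]
          · rw [flipAt_ne_apply _ _ h]
        rw [this, zmod2_add_self]
      · intro v _ _
        exact flipAt_ne i₀ v
      · intro v hv
        rw [Finset.mem_filter] at hv ⊢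
        refine ⟨Finset.mem_univ _, fun i hi => ?_⟩
        by_cases h : i = i₀
        · subst h; exact hu₀
        · rw [flipAt_ne_apply _ _ h] at hi
          exact hv.2 i hi
      · intro v _
        exact flipAt_flipAt i₀ v
    · -- some t i = 1 with u i ≠ 1 : every term vanishes
      push_neg at hle
      obtain ⟨i₀, ht₀, hu₀⟩ := hle
      apply Finset.sum_eq_zero
      intro v hv
      rw [Finset.mem_filter] at hv
      rw [monom_eq_ite, if_neg]
      intro hall
      exact hu₀ (hv.2 i₀ (hall i₀ ht₀))

lemma anf_sum_monom (a : (α → ZMod 2) → ZMod 2) (u : α → ZMod 2) :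
    anf (fun y => ∑ t : α → ZMod 2, a t * monom t y) u = a u := by
  unfold anf
  rw [Finset.sum_comm]
  simp_rw [← Finset.mul_sum, sum_monom, mul_ite, mul_one, mul_zero]
  simp

end Aux

section Aux2
variable {α : Type*} [Fintype α] [DecidableEq α]

lemma anf_coeffFun (f : (α → ZMod 2) → ZMod 2) (I : Finset α) (w : ↥I → ZMod 2)
    (t : ↥Iᶜ → ZMod 2) : anf (coeffFun f I w) t = anf f (combine I w t) :=
  anf_sum_monom (fun t => anf f (combine I w t)) t

lemma vdeg_eq (f : (α → ZMod 2) → ZMod 2) (I : Finset α) (w : ↥I → ZMod 2) :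
    vdeg f I w = (Finset.univ.filter
        (fun t : ↥Iᶜ → ZMod 2 => anf f (combine I w t) = 1)).sup
      (fun t => ((wt t : ℤ) : WithBot ℤ)) := by
  unfold vdeg deg
  congr 1
  apply Finset.filter_congr
  intro t _
  rw [anf_coeffFun]

lemma anf_mask (P : α → Prop) [DecidablePred P] (g : (α → ZMod 2) → ZMod 2)
    (u : α → ZMod 2) :
    anf (fun x => g (fun i => if P i then x i else 0)) u
      = if ∀ i, u i = 1 → P i then anf g u else 0 := by
  split_ifs with h
  · unfold anf
    apply Finset.sum_congr rfl
    intro v hv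
    rw [Finset.mem_filter] at hv
    show g _ = g v
    congr 1
    funext i
    by_cases hP : P i
    · rw [if_pos hP]
    · rw [if_neg hP]
      rcases zmod2_em (v i) with h0 | h1
      · exact h0.symm
      · exact absurd (h i (hv.2 i h1)) hP
  · push_neg at h
    obtain ⟨i₀, hu₀, hP₀⟩ := h
    unfold anf
    apply Finset.sum_involution (fun v _ => flipAt i₀ v)
    · intro v hv
      have : (fun i => if P i then flipAt i₀ v i else 0)
          = (fun i => if P i then v i else 0) := by
        funext i
        by_cases hi : i = i₀
        · subst hi; rw [if_neg hP₀, if_neg hP₀]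
        · rw [flipAt_ne_apply _ _ hi]
      rw [this, zmod2_add_self]
    · intro v _ _
      exact flipAt_ne i₀ v
    · intro v hv
      rw [Finset.mem_filter] at hv ⊢
      refine ⟨Finset.mem_univ _, fun i hi => ?_⟩
      by_cases hi₀ : i = i₀
      · subst hi₀; exact hu₀
      · rw [flipAt_ne_apply _ _ hi₀] at hi
        exact hv.2 i hi
    · intro v _
      exact flipAt_flipAt i₀ v

lemma vdeg_mask_mono (P Q : α → Prop) [DecidablePred P] [DecidablePred Q]
    (hPQ : ∀ i, P i → Q i) (g : (α → ZMod 2) → ZMod 2) (I : Finset α)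
    (w : ↥I → ZMod 2) :
    vdeg (fun x => g (fun i => if P i then x i else 0)) I w
      ≤ vdeg (fun x => g (fun i => if Q i then x i else 0)) I w := by
  rw [vdeg_eq, vdeg_eq]
  apply Finset.sup_mono
  intro t ht
  rw [Finset.mem_filter] at ht ⊢
  refine ⟨Finset.mem_univ _, ?_⟩
  have h2 := ht.2
  rw [anf_mask] at h2 ⊢
  split_ifs at h2 with hc
  · rw [if_pos (fun i hi => hPQ i (hc i hi))]
    exact h2
  · exact absurd h2 (by decide)

end Aux2


-- === monotonicity chain ===
lemma VDEG_mono {n : ℕ} {δ : Type*} [Fintype δ] [DecidableEq δ]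
    (f : (Fin n → ZMod 2) → ZMod 2) {V V' : Fin n → (δ → ZMod 2) → WithBot ℤ}
    (h : ∀ i x, V i x ≤ V' i x) (w : δ → ZMod 2) : VDEG f V w ≤ VDEG f V' w := by
  unfold VDEG
  apply Finset.sup_le
  intro p hp
  exact le_trans (Finset.sum_le_sum (fun i _ => h i _))
    (Finset.le_sup (f := fun p : (Fin n → ZMod 2) × (Fin n → δ → ZMod 2) =>
      ∑ i ∈ Finset.univ.filter (fun i => p.1 i = 1), V' i (p.2 i)) hp)

/-- the keep-predicate corresponding to `mask0`. -/
def Pmask {n N0 : ℕ} (S : Finset (Fin n)) (j : Fin N0) : Prop :=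
  if h : (j : ℕ) < n then (⟨(j : ℕ), h⟩ : Fin n) ∈ S else True

instance {n N0 : ℕ} (S : Finset (Fin n)) : DecidablePred (Pmask (N0 := N0) S) := by
  intro j
  unfold Pmask
  infer_instance

lemma mask0_eq_ite {n m N0 : ℕ} (h0 : N0 = n + m) (S : Finset (Fin n))
    (z : Fin N0 → ZMod 2) :
    mask0 h0 S z = fun j => if Pmask S j then z j else 0 := by
  funext j
  unfold mask0
  by_cases h : (j : ℕ) < n
  · rw [dif_pos h]
    by_cases hm : (⟨(j : ℕ), h⟩ : Fin n) ∈ S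
    · rw [if_pos hm, if_pos (show Pmask S j by unfold Pmask; rw [dif_pos h]; exact hm)]
    · rw [if_neg hm, if_neg (show ¬ Pmask S j by unfold Pmask; rw [dif_pos h]; exact hm)]
  · rw [dif_neg h, if_pos (show Pmask S j by unfold Pmask; rw [dif_neg h]; trivial)]

lemma Pmask_mono {n N0 : ℕ} {K I : Finset (Fin n)} (hKI : K ⊆ I) (j : Fin N0)
    (h : Pmask K j) : Pmask I j := by
  unfold Pmask at h ⊢
  by_cases hn : (j : ℕ) < n
  · rw [dif_pos hn] at h ⊢
    exact hKI h
  · rw [dif_neg hn]; trivial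

set_option maxHeartbeats 1000000 in
lemma Vt_mono {n m : ℕ} (n' : ℕ → ℕ) (h0 : n' 0 = n + m)
    (f : ∀ t, (Fin (n' t) → ZMod 2) → (Fin (n' (t + 1)) → ZMod 2))
    (J : Finset (Fin n)) {K I : Finset (Fin n)} (hKI : K ⊆ I) :
    ∀ t (i : Fin (n' (t + 1))) (w : ↥(liftJ h0 J) → ZMod 2),
      Vt n' h0 f J K t i w ≤ Vt n' h0 f J I t i w := by
  intro t
  induction t with
  | zero =>
    intro i w
    have e : ∀ (S : Finset (Fin n)), Vt n' h0 f J S 0 i w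
        = vdeg (fun z => (fun y => f 0 y i) (fun j => if Pmask S j then z j else 0))
            (liftJ h0 J) w := by
      intro S
      have hh : (fun z => f 0 (mask0 h0 S z) i)
          = fun z => (fun y => f 0 y i) (fun j => if Pmask S j then z j else 0) := by
        funext z; rw [← mask0_eq_ite h0 S z]
      show vdeg (fun z => f 0 (mask0 h0 S z) i) (liftJ h0 J) w = _
      rw [hh]
    rw [e K, e I]
    exact vdeg_mask_mono (Pmask K) (Pmask I) (Pmask_mono hKI) (fun y => f 0 y i)
      (liftJ h0 J) w
  | succ t ih =>
    intro i w
    show VDEG (fun y => f (t + 1) y i) (Vt n' h0 f J K t) w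
        ≤ VDEG (fun y => f (t + 1) y i) (Vt n' h0 f J I t) w
    exact VDEG_mono _ (fun i x => ih i x) w

lemma degHat_mono {n m : ℕ} (n' : ℕ → ℕ) (h0 : n' 0 = n + m)
    (f : ∀ t, (Fin (n' t) → ZMod 2) → (Fin (n' (t + 1)) → ZMod 2))
    (J : Finset (Fin n)) (s : ℕ) {K I : Finset (Fin n)} (hKI : K ⊆ I) :
    degHat n' h0 f J s K ≤ degHat n' h0 f J s I := by
  unfold degHat
  apply Finset.sup_le
  intro w _
  refine le_trans (add_le_add ?_ (le_refl ((wt w : ℤ) : WithBot ℤ)))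
    (Finset.le_sup (f := fun w : ↥(liftJ h0 J) → ZMod 2 =>
      vdegHat n' h0 f J s I w + ((wt w : ℤ) : WithBot ℤ)) (Finset.mem_univ w))
  unfold vdegHat
  exact VDEG_mono _ (fun i x => Vt_mono n' h0 f J hKI s i x) w


/-- Pruning: if the estimated degree w.r.t. `K ⊇ J` already reaches the
threshold `d > |J|`, then so does the estimated degree w.r.t. any `I ⊇ K`
(here `r = s + 2`). -/
theorem degHat_prune {n m : ℕ} (n' : ℕ → ℕ) (h0 : n' 0 = n + m)
    (s : ℕ) (hr : n' (s + 2) = 1)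
    (f : ∀ t, (Fin (n' t) → ZMod 2) → (Fin (n' (t + 1)) → ZMod 2))
    (J : Finset (Fin n)) (d : ℤ) (hd : (J.card : ℤ) < d)
    (K : Finset (Fin n)) (hJK : J ⊆ K)
    (hK : (d : WithBot ℤ) ≤ degHat n' h0 f J s K) :
    ∀ I : Finset (Fin n), K ⊆ I → (d : WithBot ℤ) ≤ degHat n' h0 f J s I := by
  intro I hKI
  exact le_trans hK (degHat_mono n' h0 f J s hKI)
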